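/- Let G be a comonad on a category E and (P, σ) an oplax morphism of comonads G → G, with Q : E_G → E_G the corresponding lifted functor satisfying U_G ∘ Q = P ∘ U_G. Define H : Alg(P) → Alg(P) by H(X, s) = (GX, Gs ∘ σ(X)). Then: (1) H carries a comonad structure on Alg(P); (2) U_P ∘ H = G ∘ U_P and (U_P, id) is an oplax morphism of comonads H → G; (3) the category Alg(Q) of Q-algebras is isomorphic to the category Alg(P)_H of H-coalgebras, compatibly with the forgetful functors to E_G and to Alg(P). -/

import Mathlib

open CategoryTheory CategoryTheory.Limits

universe v u v₂ u₂

variable {E : Type u} [Category.{v} E]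

/-- `(S, σ)` is an oplax morphism of comonads `G → H`. -/
def IsOplaxMorphism {F : Type u₂} [Category.{v₂} F] (G : Comonad E) (H : Comonad F) (S : E ⥤ F)
    (σ : G.toFunctor ⋙ S ⟶ S ⋙ H.toFunctor) : Prop :=
  (∀ X : E, σ.app X ≫ H.ε.app (S.obj X) = S.map (G.ε.app X)) ∧
  (∀ X : E, σ.app X ≫ H.δ.app (S.obj X) =
      S.map (G.δ.app X) ≫ σ.app (G.obj X) ≫ H.map (σ.app X))

/-- The functor `Alg(P) ⥤ Alg(Q)` induced by a lax morphism `(H, σ) : P → Q` of endofunctors,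
sending `(X, s)` to `(HX, Hs ∘ σ X)`. -/
@[simps]
def algMap {F : Type u₂} [Category.{v₂} F] {P : E ⥤ E} {Q : F ⥤ F} (H : E ⥤ F)
    (σ : H ⋙ Q ⟶ P ⋙ H) : Endofunctor.Algebra P ⥤ Endofunctor.Algebra Q where
  obj A := ⟨H.obj A.a, σ.app A.a ≫ H.map A.str⟩
  map {A B} f :=
    { f := H.map f.f
      h := by
        have h1 := σ.naturality f.f
        dsimp at h1 ⊢
        rw [← Category.assoc, h1, Category.assoc, Category.assoc, ← H.map_comp, f.h,
          H.map_comp] }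
  map_id A := by ext; simp
  map_comp f g := by ext; simp

section Aux

variable (G : Comonad E) (P : E ⥤ E) (σ : G.toFunctor ⋙ P ⟶ P ⋙ G.toFunctor)
  (hσ : IsOplaxMorphism G G P σ)

/-- The comonad structure on `algMap G.toFunctor σ`. -/
def Hcomonad : Comonad (Endofunctor.Algebra P) where
  toFunctor := algMap G.toFunctor σ
  ε :=
    { app := fun A =>
        { f := G.ε.app A.a
          h := by
            show P.map (G.ε.app A.a) ≫ A.str = (σ.app A.a ≫ G.map A.str) ≫ G.ε.app A.a
            rw [← hσ.1 A.a, Category.assoc, Category.assoc, G.ε.naturality A.str]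
            rfl }
      naturality := fun A B f => by
        ext
        exact G.ε.naturality f.f }
  δ :=
    { app := fun A =>
        { f := G.δ.app A.a
          h := by
            show P.map (G.δ.app A.a) ≫ (σ.app (G.obj A.a) ≫ G.map (σ.app A.a ≫ G.map A.str)) =
              (σ.app A.a ≫ G.map A.str) ≫ G.δ.app A.a
            have h2 := hσ.2 A.a
            rw [Category.assoc, G.δ.naturality A.str]
            conv_rhs => rw [← Category.assoc, h2]
            simp [G.map_comp] }
      naturality := fun A B f => by
        ext
        exact G.δ.naturality f.f }
  coassoc := fun A => by ext; exact G.coassoc A.a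
  left_counit := fun A => by ext; exact G.left_counit A.a
  right_counit := fun A => by ext; exact G.right_counit A.a

variable (Q : G.Coalgebra ⥤ G.Coalgebra) (hQ : Q ⋙ G.forget = G.forget ⋙ P)
  (hQobj : ∀ A : G.Coalgebra,
    (Q.obj A).A = P.obj A.A ∧ HEq (Q.obj A).a (P.map A.a ≫ σ.app A.A))

theorem qobj_a (A : G.Coalgebra) :
    (Q.obj A).a = eqToHom (hQobj A).1 ≫ (P.map A.a ≫ σ.app A.A) ≫
      eqToHom (congrArg G.toFunctor.obj (hQobj A).1).symm :=
  (conj_eqToHom_iff_heq _ _ (hQobj A).1 (congrArg G.toFunctor.obj (hQobj A).1)).2 (hQobj A).2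

include hQ in
theorem qmap_f {A B : G.Coalgebra} (f : A ⟶ B) :
    (Q.map f).f = eqToHom (hQobj A).1 ≫ P.map f.f ≫ eqToHom (hQobj B).1.symm :=
  Functor.congr_hom hQ f

theorem eqToHom_f_alg {F : E ⥤ E} {A B : Endofunctor.Algebra F} (h : A = B) :
    (eqToHom h).f = eqToHom (congrArg Endofunctor.Algebra.a h) := by subst h; rfl

theorem eqToHom_f_coalg {G : Comonad E} {A B : G.Coalgebra} (h : A = B) :
    (eqToHom h).f = eqToHom (congrArg Comonad.Coalgebra.A h) := by subst h; rfl

theorem alg_ext {F : E ⥤ E} {X Y : Endofunctor.Algebra F} (h : X.a = Y.a)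
    (h2 : HEq X.str Y.str) : X = Y := by
  cases X; cases Y; dsimp at h; subst h; cases eq_of_heq h2; rfl

theorem coalg_ext {G : Comonad E} {X Y : G.Coalgebra} (h : X.A = Y.A)
    (h2 : HEq X.a Y.a) : X = Y := by
  cases X; cases Y; dsimp at h; subst h; cases eq_of_heq h2; rfl

theorem comonad_coalg_ext {G : Comonad E} {X Y : Comonad.Coalgebra G} (h : X.A = Y.A)
    (h2 : HEq X.a Y.a) : X = Y := by
  cases X; cases Y; dsimp at h; subst h; cases eq_of_heq h2; rfl

/-- The functor from `Q`-algebras to `H`-coalgebras. -/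
def Kfun : Endofunctor.Algebra Q ⥤ (Hcomonad G P σ hσ).Coalgebra where
  obj X :=
    { A := ⟨X.a.A, eqToHom (hQobj X.a).1.symm ≫ X.str.f⟩
      a :=
        { f := X.a.a
          h := by
            show P.map X.a.a ≫ σ.app X.a.A ≫ G.map (eqToHom (hQobj X.a).1.symm ≫ X.str.f) =
              (eqToHom (hQobj X.a).1.symm ≫ X.str.f) ≫ X.a.a
            have h1 := X.str.h
            rw [qobj_a G P σ Q hQobj] at h1
            simp only [Category.assoc, eqToHom_map, Functor.map_comp] at h1 ⊢
            rw [← h1]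
            simp }
      counit := by ext; exact X.a.counit
      coassoc := by ext; exact X.a.coassoc }
  map {X Y} f :=
    { f :=
        { f := f.f.f
          h := by
            dsimp
            have h2 : (Q.map f.f).f ≫ Y.str.f = X.str.f ≫ f.f.f :=
              congrArg Comonad.Coalgebra.Hom.f f.h
            rw [qmap_f G P σ Q hQ hQobj] at h2
            simp only [Category.assoc] at h2 ⊢
            rw [← h2]
            simp }
      h := by
        ext
        exact f.f.h }
  map_id X := by ext; rfl
  map_comp f g := by ext; rfl

/-- The functor from `H`-coalgebras to `Q`-algebras. -/
def Kfun' : (Hcomonad G P σ hσ).Coalgebra ⥤ Endofunctor.Algebra Q where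
  obj Y :=
    { a :=
        { A := Y.A.a
          a := Y.a.f
          counit := congrArg Endofunctor.Algebra.Hom.f Y.counit
          coassoc := congrArg Endofunctor.Algebra.Hom.f Y.coassoc }
      str :=
        { f := eqToHom (hQobj _).1 ≫ Y.A.str
          h := by
            simp only [qobj_a G P σ Q hQobj]
            have h1 : P.map Y.a.f ≫ σ.app Y.A.a ≫ G.map Y.A.str = Y.A.str ≫ Y.a.f := Y.a.h
            dsimp [Hcomonad] at h1 ⊢
            simp only [Category.assoc, Functor.map_comp, eqToHom_map, eqToHom_trans,
              eqToHom_trans_assoc, eqToHom_refl, Category.id_comp]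
            exact (congrArg (fun k => eqToHom _ ≫ k) h1).trans (Category.assoc _ _ _).symm } }
  map {X Y} g :=
    { f :=
        { f := g.f.f
          h := congrArg Endofunctor.Algebra.Hom.f g.h }
      h := by
        ext
        dsimp
        have h2 := g.f.h
        rw [qmap_f G P σ Q hQ hQobj]
        simp only [Category.assoc]
        rw [← h2]
        simp }
  map_id X := by ext; rfl
  map_comp f g := by ext; rfl

theorem alg_hom_hext {F : E ⥤ E} {A B A' B' : Endofunctor.Algebra F} (hA : A = A')
    (hB : B = B') {f : A ⟶ B} {g : A' ⟶ B'} (h : HEq f.f g.f) : HEq f g := by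
  subst hA; subst hB; exact heq_of_eq (Endofunctor.Algebra.Hom.ext (eq_of_heq h))

theorem algQ_hom_hext {A B A' B' : Endofunctor.Algebra Q} (hA : A = A')
    (hB : B = B') {f : A ⟶ B} {g : A' ⟶ B'} (h : HEq f.f.f g.f.f) : HEq f g := by
  subst hA; subst hB
  exact heq_of_eq (Endofunctor.Algebra.Hom.ext
    (Comonad.Coalgebra.Hom.ext (eq_of_heq h)))

theorem hc_hom_hext {T : Comonad (Endofunctor.Algebra P)} {A B A' B' : T.Coalgebra}
    (hA : A = A') (hB : B = B') {f : A ⟶ B} {g : A' ⟶ B'} (h : HEq f.f.f g.f.f) : HEq f g := by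
  subst hA; subst hB
  exact heq_of_eq (Comonad.Coalgebra.Hom.ext
    (Endofunctor.Algebra.Hom.ext (eq_of_heq h)))

end Aux

/-- given an oplax morphism of comonads `(P, σ) : G → G` with lifted endofunctor
`Q` on `E_G`, the functor `H : Alg(P) ⥤ Alg(P)`, `H(X, s) = (GX, Gs ∘ σ X)`, carries a comonad
structure; `U_P ∘ H = G ∘ U_P` and `(U_P, id)` is an oplax morphism `H → G`; and `Alg(Q)` is
isomorphic to the category of `H`-coalgebras compatibly with the forgetful functors. -/
theorem algebras_in_coalgebras (G : Comonad E) (P : E ⥤ E)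
    (σ : G.toFunctor ⋙ P ⟶ P ⋙ G.toFunctor) (hσ : IsOplaxMorphism G G P σ)
    (Q : G.Coalgebra ⥤ G.Coalgebra) (hQ : Q ⋙ G.forget = G.forget ⋙ P)
    (hQobj : ∀ A : G.Coalgebra,
      (Q.obj A).A = P.obj A.A ∧ HEq (Q.obj A).a (P.map A.a ≫ σ.app A.A)) :
    ∃ (Hc : Comonad (Endofunctor.Algebra P)) (hHc : Hc.toFunctor = algMap G.toFunctor σ)
      (hU : Hc.toFunctor ⋙ Endofunctor.Algebra.forget P =
        Endofunctor.Algebra.forget P ⋙ G.toFunctor),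
      IsOplaxMorphism Hc G (Endofunctor.Algebra.forget P) (eqToHom hU) ∧
      ∃ (K : Endofunctor.Algebra Q ⥤ Hc.Coalgebra)
        (K' : Hc.Coalgebra ⥤ Endofunctor.Algebra Q),
        K ⋙ K' = 𝟭 _ ∧ K' ⋙ K = 𝟭 _ ∧
        K ⋙ Comonad.forget Hc = algMap G.forget (eqToHom hQ.symm) ∧
        (∀ X : Endofunctor.Algebra Q, HEq ((K.obj X).a.f) X.a.a) := by
  refine ⟨Hcomonad G P σ hσ, rfl, rfl, ⟨fun X => ?_, fun X => ?_⟩,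
    Kfun G P σ hσ Q hQ hQobj, Kfun' G P σ hσ Q hQ hQobj, ?_, ?_, ?_, fun X => HEq.rfl⟩
  · show 𝟙 _ ≫ G.ε.app X.a = G.ε.app X.a
    simp
  · show 𝟙 _ ≫ G.δ.app X.a = G.δ.app X.a ≫ 𝟙 _ ≫ G.map (𝟙 _)
    simp
  · -- K ⋙ K' = 𝟭
    have hobj : ∀ X : Endofunctor.Algebra Q,
        (Kfun G P σ hσ Q hQ hQobj ⋙ Kfun' G P σ hσ Q hQ hQobj).obj X = X := by
      intro X
      refine alg_ext rfl (heq_of_eq (Comonad.Coalgebra.Hom.ext ?_))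
      simp [Kfun, Kfun']
    refine CategoryTheory.Functor.ext hobj (fun X Y f => ?_)
    exact (conj_eqToHom_iff_heq _ _ (hobj X) (hobj Y)).2
      (algQ_hom_hext G Q (hobj X) (hobj Y) HEq.rfl)
  · -- K' ⋙ K = 𝟭
    have hobj : ∀ Y : (Hcomonad G P σ hσ).Coalgebra,
        (Kfun' G P σ hσ Q hQ hQobj ⋙ Kfun G P σ hσ Q hQ hQobj).obj Y = Y := by
      intro Y
      have hA : ((Kfun' G P σ hσ Q hQ hQobj ⋙ Kfun G P σ hσ Q hQ hQobj).obj Y).A = Y.A := by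
        refine alg_ext rfl (heq_of_eq ?_)
        simp [Kfun, Kfun']
      exact comonad_coalg_ext hA
        (alg_hom_hext hA (congrArg (Hcomonad G P σ hσ).toFunctor.obj hA) HEq.rfl)
    refine CategoryTheory.Functor.ext hobj (fun X Y f => ?_)
    exact (conj_eqToHom_iff_heq _ _ (hobj X) (hobj Y)).2
      (hc_hom_hext P (hobj X) (hobj Y) HEq.rfl)
  · -- K ⋙ forget = algMap G.forget _
    have hobj : ∀ X : Endofunctor.Algebra Q,
        (Kfun G P σ hσ Q hQ hQobj ⋙ Comonad.forget (Hcomonad G P σ hσ)).obj X =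
          (algMap G.forget (eqToHom hQ.symm)).obj X := by
      intro X
      refine alg_ext rfl (heq_of_eq ?_)
      simp [Kfun, eqToHom_app]
      rfl
    refine CategoryTheory.Functor.ext hobj (fun X Y f => ?_)
    exact (conj_eqToHom_iff_heq _ _ (hobj X) (hobj Y)).2
      (alg_hom_hext (hobj X) (hobj Y) HEq.rfl)
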